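/- arXiv:1603.03214 — 2 statements merged into one kernel-verified Lean document; each statement's English description precedes it below -/
import Mathlib

section
/- For any fixed integer l ≥ 0 and any R > 0, the radial Coulomb eigenfunctions converge uniformly on (0, R) to a Bessel profile: lim_{n→∞} sup_{r ∈ (0,R)} | f_{nl}(r) − J_{2l+1}(√(8r)) / √(8r) | = 0, where the limit is over integers n > l. -/
open MeasureTheory Metric Set

noncomputable section

/-- The associated Laguerre polynomial `L_k^α(x) = ∑_{i=0}^{k} (-1)^i C(k+α, k-i) x^i / i!`. -/
def laguerre (k α : ℕ) (x : ℝ) : ℝ :=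
  ∑ i ∈ Finset.range (k + 1),
    (-1 : ℝ) ^ i * (Nat.choose (k + α) (k - i)) * x ^ i / (Nat.factorial i)

/-- The normalization constant `A_{nl} = 2^{l-1} (n-l-1)! / (n+l)!`. -/
def coulombA (n l : ℕ) : ℝ :=
  (2 : ℝ) ^ ((l : ℤ) - 1) * (Nat.factorial (n - l - 1)) / (Nat.factorial (n + l))

/-- The radial Coulomb eigenfunction `f_{nl}(r) = A_{nl} e^{-r/n} r^l L_{n-l-1}^{2l+1}(2r/n)`. -/
def fnl (n l : ℕ) (r : ℝ) : ℝ :=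
  coulombA n l * Real.exp (-r / n) * r ^ l * laguerre (n - l - 1) (2 * l + 1) (2 * r / n)

/-- The Bessel function of the first kind of integer order `ν`. -/
def besselJ (ν : ℕ) (x : ℝ) : ℝ :=
  ∑' j : ℕ, (-1 : ℝ) ^ j / ((Nat.factorial j) * (Nat.factorial (j + ν))) * (x / 2) ^ (2 * j + ν)

/-- The Bessel profile `J_{2l+1}(√(8r)) / √(8r)`. -/
def besselProfile (l : ℕ) (r : ℝ) : ℝ :=
  besselJ (2 * l + 1) (Real.sqrt (8 * r)) / Real.sqrt (8 * r)

/-! ### Auxiliary definitions and lemmas -/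

/-- The `i`-th coefficient term of the Bessel profile, as a power series in `r`. -/
def cterm (l i : ℕ) (r : ℝ) : ℝ :=
  (-1 : ℝ) ^ i * 2 ^ (i + l) * r ^ (i + l) /
    (2 * (Nat.factorial i) * (Nat.factorial (i + (2 * l + 1))))

/-- A summable dominating sequence for `cterm`. -/
def Db (l : ℕ) (M0 : ℝ) (i : ℕ) : ℝ := (2 * M0) ^ (i + l) / (2 * (Nat.factorial i))

lemma summable_Db (l : ℕ) (M0 : ℝ) : Summable (Db l M0) := by
  have h := (Real.summable_pow_div_factorial (2 * M0)).mul_left ((2 * M0) ^ l / 2)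
  refine h.congr fun i => ?_
  unfold Db
  rw [pow_add]
  field_simp

lemma Db_nonneg (l : ℕ) {M0 : ℝ} (h : 0 ≤ M0) (i : ℕ) : 0 ≤ Db l M0 i := by
  unfold Db; positivity

lemma cterm_abs_le (l i : ℕ) {M0 r : ℝ} (h1 : 1 ≤ M0) (hr : |r| ≤ M0) :
    |cterm l i r| ≤ Db l M0 i := by
  have h0 : (0:ℝ) < M0 := lt_of_lt_of_le one_pos h1
  have habs : |cterm l i r| = 2 ^ (i + l) * |r| ^ (i + l) /
      (2 * (Nat.factorial i) * (Nat.factorial (i + (2 * l + 1)))) := by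
    unfold cterm
    rw [abs_div]
    congr 1
    · simp [abs_mul, abs_pow]
    · exact abs_of_pos (by positivity)
  rw [habs]
  unfold Db
  rw [mul_pow]
  have h2 : |r| ^ (i + l) ≤ M0 ^ (i + l) := pow_le_pow_left₀ (abs_nonneg r) hr _
  have h3 : (1:ℝ) ≤ (Nat.factorial (i + (2 * l + 1)) : ℝ) := by
    exact_mod_cast Nat.one_le_iff_ne_zero.2 (Nat.factorial_ne_zero _)
  calc 2 ^ (i + l) * |r| ^ (i + l) / (2 * (Nat.factorial i) * (Nat.factorial (i + (2 * l + 1))))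
      ≤ 2 ^ (i + l) * M0 ^ (i + l) / (2 * (Nat.factorial i) * 1) := by
        refine div_le_div₀ (by positivity) (by gcongr) (by positivity) (by gcongr)
    _ = 2 ^ (i + l) * M0 ^ (i + l) / (2 * (Nat.factorial i)) := by rw [mul_one]
    _ = _ := by ring

lemma summable_cterm (l : ℕ) (r : ℝ) : Summable (fun i => cterm l i r) := by
  refine Summable.of_norm_bounded (summable_Db l (max |r| 1)) fun i => ?_
  rw [Real.norm_eq_abs]
  exact cterm_abs_le l i (le_max_right _ _) (le_max_left _ _)

lemma besselProfile_eq (l : ℕ) {r : ℝ} (hr : 0 < r) :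
    besselProfile l r = ∑' i, cterm l i r := by
  unfold besselProfile besselJ
  rw [← tsum_div_const]
  refine tsum_congr fun j => ?_
  set s := Real.sqrt (8 * r) with hs
  have hs2 : s ^ 2 = 8 * r := Real.sq_sqrt (by positivity)
  have hs0 : 0 < s := Real.sqrt_pos.2 (by positivity)
  have hpow : (s / 2) ^ (2 * j + (2 * l + 1)) = (2 * r) ^ (j + l) * (s / 2) := by
    have h1 : (s / 2) ^ 2 = 2 * r := by rw [div_pow, hs2]; ring
    calc (s / 2) ^ (2 * j + (2 * l + 1)) = ((s / 2) ^ 2) ^ (j + l) * (s / 2) := by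
          rw [← pow_mul, ← pow_succ]; congr 1; ring
      _ = (2 * r) ^ (j + l) * (s / 2) := by rw [h1]
  rw [hpow, mul_pow]
  unfold cterm
  have hfj : ((Nat.factorial j : ℝ)) ≠ 0 := by exact_mod_cast Nat.factorial_ne_zero j
  have hfj2 : ((Nat.factorial (j + (2 * l + 1)) : ℝ)) ≠ 0 := by
    exact_mod_cast Nat.factorial_ne_zero _
  field_simp

/-- The descFactorial weight appearing in the expansion of `fnl`. -/
def wght (n l i : ℕ) : ℝ := ((n - l - 1).descFactorial i : ℝ) / (n : ℝ) ^ i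

lemma fnl_eq (n l : ℕ) (hn : l < n) (r : ℝ) :
    fnl n l r = Real.exp (-r / n) *
      ∑ i ∈ Finset.range (n - l), cterm l i r * wght n l i := by
  have hnn : (0:ℝ) < (n : ℝ) := by exact_mod_cast (by omega : 0 < n)
  have hn0 : (n : ℝ) ≠ 0 := hnn.ne'
  unfold fnl laguerre coulombA
  have hrange : n - l - 1 + 1 = n - l := by omega
  rw [hrange, Finset.mul_sum, Finset.mul_sum]
  refine Finset.sum_congr rfl fun i hi => ?_
  have hi' : i ≤ n - l - 1 := by
    have := Finset.mem_range.1 hi; omega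
  have hka : n - l - 1 + (2 * l + 1) = n + l := by omega
  rw [hka]
  have hf1 : ((Nat.factorial (n - l - 1 - i) : ℝ)) ≠ 0 := by
    exact_mod_cast Nat.factorial_ne_zero _
  have hf2 : ((Nat.factorial (i + (2 * l + 1)) : ℝ)) ≠ 0 := by
    exact_mod_cast Nat.factorial_ne_zero _
  have hf3 : ((Nat.factorial (n + l) : ℝ)) ≠ 0 := by exact_mod_cast Nat.factorial_ne_zero _
  have hf4 : ((Nat.factorial i : ℝ)) ≠ 0 := by exact_mod_cast Nat.factorial_ne_zero _
  -- cast identities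
  have hsub : n + l - (n - l - 1 - i) = i + (2 * l + 1) := by omega
  have hle : n - l - 1 - i ≤ n + l := by omega
  have hchoose := Nat.choose_mul_factorial_mul_factorial hle
  rw [hsub] at hchoose
  have hdesc := Nat.factorial_mul_descFactorial hi'
  have hC : ((n + l).choose (n - l - 1 - i) : ℝ) =
      (Nat.factorial (n + l) : ℝ) /
        ((Nat.factorial (n - l - 1 - i) : ℝ) * (Nat.factorial (i + (2 * l + 1)) : ℝ)) := by
    rw [eq_div_iff (mul_ne_zero hf1 hf2), ← mul_assoc]
    exact_mod_cast hchoose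
  have hD : ((n - l - 1).descFactorial i : ℝ) =
      (Nat.factorial (n - l - 1) : ℝ) / (Nat.factorial (n - l - 1 - i) : ℝ) := by
    rw [eq_div_iff hf1, mul_comm]
    exact_mod_cast hdesc
  have h2 : (2 : ℝ) ^ ((l : ℤ) - 1) = 2 ^ l / 2 := by
    rw [zpow_sub₀ (two_ne_zero), zpow_natCast, zpow_one]
  unfold cterm wght
  rw [hC, hD, h2]
  field_simp
  have hni : (n:ℝ)^i * ((n:ℝ)⁻¹)^i = 1 := by rw [← mul_pow, mul_inv_cancel₀ hn0, one_pow]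
  linear_combination (r ^ l * r ^ i * 2 ^ l * 2 ^ i) * hni

lemma wght_nonneg (n l i : ℕ) : 0 ≤ wght n l i := by unfold wght; positivity

lemma wght_le_one (n l i : ℕ) (hn : 0 < n) : wght n l i ≤ 1 := by
  unfold wght
  rw [div_le_one (by positivity)]
  have h1 : (n - l - 1).descFactorial i ≤ (n - l - 1) ^ i := Nat.descFactorial_le_pow _ _
  have h2 : (n - l - 1) ^ i ≤ n ^ i := Nat.pow_le_pow_left (by omega) i
  exact_mod_cast le_trans h1 h2

lemma wght_ge (n l i : ℕ) (hn : l < n) (hi : i ≤ n - l - 1) :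
    1 - (i : ℝ) * ((l : ℝ) + i) / n ≤ wght n l i := by
  have hnn : (0:ℝ) < (n : ℝ) := by exact_mod_cast (by omega : 0 < n)
  have hli : l + i ≤ n := by omega
  have h1 : ((n - (l + i) : ℕ) : ℝ) = (n : ℝ) - ((l : ℝ) + i) := by
    rw [Nat.cast_sub hli]; push_cast; ring
  have h2 : (n - (l + i)) ^ i ≤ (n - l - 1).descFactorial i := by
    have h := Nat.pow_sub_le_descFactorial (n - l - 1) i
    have he : n - l - 1 + 1 - i = n - (l + i) := by omega
    rwa [he] at h
  have h3 : ((n : ℝ) - ((l : ℝ) + i)) ^ i / (n : ℝ) ^ i ≤ wght n l i := by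
    unfold wght
    gcongr
    rw [← h1]
    exact_mod_cast h2
  refine le_trans ?_ h3
  have h4 : ((n : ℝ) - ((l : ℝ) + i)) ^ i / (n : ℝ) ^ i = (1 - ((l : ℝ) + i) / n) ^ i := by
    rw [← div_pow]
    congr 1
    field_simp
  rw [h4]
  have hd1 : ((l : ℝ) + i) / n ≤ 1 := by
    rw [div_le_one hnn]; exact_mod_cast hli
  have h5 := one_add_mul_le_pow (a := -(((l : ℝ) + i) / n)) (by
    have : (0:ℝ) ≤ ((l : ℝ) + i) / n := by positivity
    linarith) i
  calc 1 - (i : ℝ) * ((l : ℝ) + i) / n = 1 + (i : ℝ) * (-(((l : ℝ) + i) / n)) := by ring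
    _ ≤ (1 + -(((l : ℝ) + i) / n)) ^ i := h5
    _ = (1 - ((l : ℝ) + i) / n) ^ i := by ring_nf

set_option maxHeartbeats 1000000 in
/-- For fixed `l` and `R > 0`, the radial Coulomb eigenfunctions `f_{nl}` converge uniformly
on `(0, R)` to the Bessel profile `J_{2l+1}(√(8r))/√(8r)` as `n → ∞` (over integers `n > l`). -/
theorem fnl_tendsto_besselProfile_uniformly (l : ℕ) (R : ℝ) (hR : 0 < R) :
    ∀ ε : ℝ, 0 < ε → ∃ N : ℕ, ∀ n : ℕ, N ≤ n → l < n →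
      ∀ r ∈ Set.Ioo (0 : ℝ) R, |fnl n l r - besselProfile l r| < ε := by
  intro ε hε
  set M0 : ℝ := max R 1 with hM0
  have hM01 : 1 ≤ M0 := le_max_right _ _
  have hM0R : R ≤ M0 := le_max_left _ _
  have hDb := summable_Db l M0
  -- choose the truncation point M
  have htail : Filter.Tendsto (fun m => ∑' j, Db l M0 (j + m)) Filter.atTop (nhds 0) :=
    tendsto_sum_nat_add _
  rw [Metric.tendsto_atTop] at htail
  obtain ⟨M, hM⟩ := htail (ε / 3) (by linarith)
  have hMtail : ∀ m, M ≤ m → ∑' j, Db l M0 (j + m) < ε / 3 := by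
    intro m hm
    have := hM m hm
    rw [Real.dist_eq, sub_zero] at this
    exact lt_of_le_of_lt (le_abs_self _) this
  set S : ℝ := ∑ i ∈ Finset.range M, Db l M0 i with hS
  have hS0 : 0 ≤ S := Finset.sum_nonneg fun i _ => Db_nonneg l (by linarith) i
  set K : ℝ := R + (M : ℝ) * ((l : ℝ) + M) with hK
  have hK0 : 0 < K := by positivity
  -- choose N
  refine ⟨max (M + l + 1) (max (Nat.ceil R + 1) (Nat.ceil (3 * S * K / ε) + 1)), ?_⟩
  intro n hNn hln r hr
  obtain ⟨hr0, hrR⟩ := hr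
  have hnM : M + l + 1 ≤ n := le_trans (le_max_left _ _) hNn
  have hnR : R ≤ (n : ℝ) := by
    have h1 : Nat.ceil R + 1 ≤ n := le_trans (le_trans (le_max_left _ _) (le_max_right _ _)) hNn
    calc R ≤ (Nat.ceil R : ℝ) := Nat.le_ceil R
      _ ≤ (n : ℝ) := by exact_mod_cast by omega
  have hnSK : 3 * S * K / ε < (n : ℝ) := by
    have h1 : Nat.ceil (3 * S * K / ε) + 1 ≤ n :=
      le_trans (le_trans (le_max_right _ _) (le_max_right _ _)) hNn
    calc 3 * S * K / ε ≤ (Nat.ceil (3 * S * K / ε) : ℝ) := Nat.le_ceil _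
      _ < (n : ℝ) := by exact_mod_cast by omega
  have hnn : (0:ℝ) < (n : ℝ) := by exact_mod_cast (by omega : 0 < n)
  -- summability facts
  have hsc : Summable (fun i => cterm l i r) := summable_cterm l r
  have habs : ∀ i, |cterm l i r| ≤ Db l M0 i := fun i =>
    cterm_abs_le l i hM01 (by rw [abs_of_pos hr0]; linarith)
  -- the Bessel profile split
  have hsplit := Summable.sum_add_tsum_nat_add (f := fun i => cterm l i r) (n - l) hsc
  set T : ℝ := ∑' j, cterm l (j + (n - l)) r with hT
  have hB : besselProfile l r = (∑ i ∈ Finset.range (n - l), cterm l i r) + T := by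
    rw [besselProfile_eq l hr0, ← hsplit]
  rw [fnl_eq n l hln r, hB]
  set E : ℝ := Real.exp (-r / n) with hE
  have hE1 : E ≤ 1 := by
    rw [hE, ← Real.exp_zero]
    apply Real.exp_le_exp.2
    have h1 : -r / (n : ℝ) = -(r / n) := by ring
    have h2 : 0 < r / (n : ℝ) := by positivity
    rw [h1]
    linarith
  have hE0 : 0 < E := Real.exp_pos _
  have hEge : 1 - R / n ≤ E := by
    have h := Real.add_one_le_exp (-r / (n : ℝ))
    have h2 : r / (n : ℝ) ≤ R / n := by gcongr
    have h4 : -r / (n : ℝ) = -(r / n) := by ring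
    rw [hE]
    linarith [h, h2, h4]
  -- rearrange the difference
  have hre : E * (∑ i ∈ Finset.range (n - l), cterm l i r * wght n l i) -
      ((∑ i ∈ Finset.range (n - l), cterm l i r) + T)
      = (∑ i ∈ Finset.range (n - l), cterm l i r * (E * wght n l i - 1)) - T := by
    rw [Finset.mul_sum]
    have : ∑ i ∈ Finset.range (n - l), cterm l i r * (E * wght n l i - 1)
        = ∑ i ∈ Finset.range (n - l), (E * (cterm l i r * wght n l i) - cterm l i r) := by
      refine Finset.sum_congr rfl fun i _ => by ring
    rw [this, Finset.sum_sub_distrib]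
    ring
  rw [hre]
  -- per-term bounds on |E * w - 1|
  have hw01 : ∀ i, 0 ≤ E * wght n l i ∧ E * wght n l i ≤ 1 := by
    intro i
    constructor
    · exact mul_nonneg hE0.le (wght_nonneg n l i)
    · calc E * wght n l i ≤ 1 * 1 :=
          mul_le_mul hE1 (wght_le_one n l i (by omega)) (wght_nonneg n l i) zero_le_one
        _ = 1 := by ring
  have hbnd1 : ∀ i, |cterm l i r * (E * wght n l i - 1)| ≤ Db l M0 i := by
    intro i
    rw [abs_mul]
    calc |cterm l i r| * |E * wght n l i - 1| ≤ Db l M0 i * 1 := by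
          apply mul_le_mul (habs i) ?_ (abs_nonneg _) (Db_nonneg l (by linarith) i)
          rw [abs_le]
          exact ⟨by linarith [(hw01 i).1], by linarith [(hw01 i).2]⟩
      _ = Db l M0 i := by ring
  have hbnd2 : ∀ i < M, |cterm l i r * (E * wght n l i - 1)| ≤ Db l M0 i * (K / n) := by
    intro i hiM
    have hi' : i ≤ n - l - 1 := by omega
    have hw := wght_ge n l i hln hi'
    have hwle := wght_le_one n l i (by omega)
    have hw0 := wght_nonneg n l i
    have hEw : 1 - K / n ≤ E * wght n l i := by
      have s1 : (1 - R / n) * wght n l i ≤ E * wght n l i :=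
        mul_le_mul_of_nonneg_right hEge hw0
      have s2 : (1 - R / n) * (1 - (i : ℝ) * ((l : ℝ) + i) / n) ≤ (1 - R / n) * wght n l i := by
        apply mul_le_mul_of_nonneg_left hw
        have : R / n ≤ 1 := by rw [div_le_one hnn]; exact hnR
        linarith
      have s3 : 1 - K / n ≤ (1 - R / n) * (1 - (i : ℝ) * ((l : ℝ) + i) / n) := by
        have hiM' : (i : ℝ) ≤ (M : ℝ) := by exact_mod_cast hiM.le
        have hiM'' : (i : ℝ) * ((l : ℝ) + i) ≤ (M : ℝ) * ((l : ℝ) + M) := by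
          apply mul_le_mul hiM' (by linarith) (by positivity) (by positivity)
        have e1 : (0:ℝ) ≤ R / n := by positivity
        have e2 : (0:ℝ) ≤ (i : ℝ) * ((l : ℝ) + i) / n := by positivity
        have e3 : (0:ℝ) ≤ (R / n) * ((i : ℝ) * ((l : ℝ) + i) / n) := by positivity
        have e4 : (i : ℝ) * ((l : ℝ) + i) / n ≤ (M : ℝ) * ((l : ℝ) + M) / n := by gcongr
        have : (1 - R / n) * (1 - (i : ℝ) * ((l : ℝ) + i) / n)
            = 1 - R / n - (i : ℝ) * ((l : ℝ) + i) / n + (R / n) * ((i : ℝ) * ((l : ℝ) + i) / n) := by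
          ring
        rw [this, hK]
        have : (R + (M : ℝ) * ((l : ℝ) + M)) / n = R / n + (M : ℝ) * ((l : ℝ) + M) / n := by ring
        rw [this]
        linarith
      linarith
    rw [abs_mul]
    apply mul_le_mul (habs i) ?_ (abs_nonneg _) (Db_nonneg l (by linarith) i)
    rw [abs_le]
    constructor
    · have := (hw01 i).2
      have hKn : 0 ≤ K / n := by positivity
      linarith
    · linarith [(hw01 i).2, hEw]
  -- now assemble
  have hMnl : M ≤ n - l := by omega
  have habsle : |(∑ i ∈ Finset.range (n - l), cterm l i r * (E * wght n l i - 1)) - T|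
      ≤ (∑ i ∈ Finset.range (n - l), |cterm l i r * (E * wght n l i - 1)|) + |T| := by
    calc |(∑ i ∈ Finset.range (n - l), cterm l i r * (E * wght n l i - 1)) - T|
        ≤ |∑ i ∈ Finset.range (n - l), cterm l i r * (E * wght n l i - 1)| + |T| :=
          abs_sub _ _
      _ ≤ _ := by
          gcongr
          exact Finset.abs_sum_le_sum_abs _ _
  -- split the finite sum
  have hsplit2 : (∑ i ∈ Finset.range (n - l), |cterm l i r * (E * wght n l i - 1)|)
      = (∑ i ∈ Finset.range M, |cterm l i r * (E * wght n l i - 1)|)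
      + ∑ i ∈ Finset.Ico M (n - l), |cterm l i r * (E * wght n l i - 1)| := by
    rw [Finset.range_eq_Ico, Finset.range_eq_Ico]
    exact (Finset.sum_Ico_consecutive (f := fun i => |cterm l i r * (E * wght n l i - 1)|) (Nat.zero_le M) hMnl).symm
  -- piece A
  have hA : (∑ i ∈ Finset.range M, |cterm l i r * (E * wght n l i - 1)|) ≤ S * (K / n) := by
    rw [hS, Finset.sum_mul]
    apply Finset.sum_le_sum
    intro i hi
    exact hbnd2 i (Finset.mem_range.1 hi)
  have hAe : S * (K / n) < ε / 3 := by
    rw [mul_div_assoc', div_lt_iff₀ hnn]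
    have : 3 * S * K / ε < n := hnSK
    rw [div_lt_iff₀ hε] at this
    nlinarith
  -- piece B
  have hshiftM : Summable (fun j => Db l M0 (j + M)) := (summable_nat_add_iff M).2 hDb
  have hB2 : (∑ i ∈ Finset.Ico M (n - l), |cterm l i r * (E * wght n l i - 1)|)
      ≤ ∑' j, Db l M0 (j + M) := by
    calc (∑ i ∈ Finset.Ico M (n - l), |cterm l i r * (E * wght n l i - 1)|)
        ≤ ∑ i ∈ Finset.Ico M (n - l), Db l M0 i :=
          Finset.sum_le_sum fun i _ => hbnd1 i
      _ = ∑ j ∈ Finset.range (n - l - M), Db l M0 (M + j) :=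
          Finset.sum_Ico_eq_sum_range _ _ _
      _ = ∑ j ∈ Finset.range (n - l - M), Db l M0 (j + M) := by
          refine Finset.sum_congr rfl fun j _ => by rw [Nat.add_comm]
      _ ≤ ∑' j, Db l M0 (j + M) :=
          hshiftM.sum_le_tsum _ (fun j _ => Db_nonneg l (by linarith) _)
  -- piece C
  have hshiftn : Summable (fun j => Db l M0 (j + (n - l))) := (summable_nat_add_iff _).2 hDb
  have hscshift : Summable (fun j => |cterm l (j + (n - l)) r|) := by
    refine Summable.of_nonneg_of_le (fun j => abs_nonneg _) (fun j => habs _) hshiftn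
  have hC : |T| ≤ ∑' j, Db l M0 (j + (n - l)) := by
    have hnorm : Summable (fun j => ‖cterm l (j + (n - l)) r‖) := by
      simp only [Real.norm_eq_abs]
      exact hscshift
    have habs2 := norm_tsum_le_tsum_norm hnorm
    simp only [Real.norm_eq_abs] at habs2
    calc |T| ≤ ∑' j, |cterm l (j + (n - l)) r| := by rw [hT]; exact habs2
      _ ≤ ∑' j, Db l M0 (j + (n - l)) := hscshift.tsum_le_tsum (fun j => habs _) hshiftn
  have hCe : ∑' j, Db l M0 (j + (n - l)) < ε / 3 := hMtail (n - l) (by omega)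
  have hBe : ∑' j, Db l M0 (j + M) < ε / 3 := hMtail M le_rfl
  calc |(∑ i ∈ Finset.range (n - l), cterm l i r * (E * wght n l i - 1)) - T|
      ≤ (∑ i ∈ Finset.range (n - l), |cterm l i r * (E * wght n l i - 1)|) + |T| := habsle
    _ < ε / 3 + ε / 3 + ε / 3 := by
        rw [hsplit2]
        have := le_trans hC hCe.le
        linarith [lt_of_le_of_lt hA hAe, lt_of_le_of_lt hB2 hBe, lt_of_le_of_lt hC hCe]
    _ = ε := by ring
end
end

section
/- For any fixed integer l ≥ 0 and any R > 0 there exists a constant C > 0 such that for all integers n > l and all r ∈ (0, R], | f_{nl}(r) − J_{2l+1}(√(8r)) / √(8r) | ≤ C r^{3/4} n^{−2}. -/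
open MeasureTheory Metric Set

noncomputable section

namespace CoulombAux

open Finset

/-- Coefficient of `r^i` in `laguerre (n-l-1) (2l+1) (2r/n)`, extended by zero. -/
def lagc (n l i : ℕ) : ℝ :=
  if i ≤ n - l - 1 then
    (-1 : ℝ) ^ i * ((n - l - 1 + (2 * l + 1)).choose (n - l - 1 - i)) * (2 / (n : ℝ)) ^ i
      / (Nat.factorial i)
  else 0

/-- Coefficient of `r^m` in `exp (-r/n)`. -/
def expc (n m : ℕ) : ℝ := (-(1 : ℝ) / n) ^ m / (Nat.factorial m)

/-- The basic coefficient sum. -/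
def Ssum (n l j : ℕ) : ℝ :=
  ∑ i ∈ Finset.range (j + 1),
    2 ^ i * ((n - l - 1).descFactorial i : ℝ)
      / (Nat.factorial i * Nat.factorial (j - i) * Nat.factorial (2 * l + 1 + i))

/-- Coefficient of `r^(j+l)` in `fnl n l`. -/
def dcoef (n l j : ℕ) : ℝ := (2 : ℝ) ^ ((l : ℤ) - 1) * (-1) ^ j / (n : ℝ) ^ j * Ssum n l j

/-- Coefficient of `r^(j+l)` in `besselProfile l`. -/
def bcoef (l j : ℕ) : ℝ :=
  (2 : ℝ) ^ ((l : ℤ) - 1) * (-2) ^ j / (Nat.factorial j * Nat.factorial (j + 2 * l + 1))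

lemma fact_pos (m : ℕ) : (0 : ℝ) < (Nat.factorial m : ℝ) := by
  exact_mod_cast Nat.factorial_pos m

lemma fact_ne (m : ℕ) : ((Nat.factorial m : ℝ)) ≠ 0 := (fact_pos m).ne'

lemma one_le_fact (m : ℕ) : (1 : ℝ) ≤ (Nat.factorial m : ℝ) := by
  exact_mod_cast Nat.one_le_iff_ne_zero.mpr (Nat.factorial_ne_zero m)

lemma cpow_pos (l : ℕ) : (0 : ℝ) < (2 : ℝ) ^ ((l : ℤ) - 1) := zpow_pos (by norm_num) _

/-- Laguerre as a tsum. -/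
lemma laguerre_tsum (n l : ℕ) (r : ℝ) :
    laguerre (n - l - 1) (2 * l + 1) (2 * r / n) = ∑' i, lagc n l i * r ^ i := by
  rw [tsum_eq_sum (s := Finset.range (n - l - 1 + 1))
    (by
      intro i hi
      rw [Finset.mem_range, Nat.lt_add_one_iff, not_le] at hi
      simp [lagc, Nat.not_le.mpr hi] )]
  unfold laguerre lagc
  refine Finset.sum_congr rfl ?_
  intro i hi
  rw [Finset.mem_range, Nat.lt_add_one_iff] at hi
  rw [if_pos hi]
  have : (2 * r / (n : ℝ)) ^ i = (2 / (n : ℝ)) ^ i * r ^ i := by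
    rw [← mul_pow]; ring_nf
  rw [this]; ring

/-- exp as a tsum. -/
lemma exp_tsum (n : ℕ) (r : ℝ) :
    Real.exp (-r / n) = ∑' m, expc n m * r ^ m := by
  rw [Real.exp_eq_exp_ℝ, NormedSpace.exp_eq_tsum_div]
  refine tsum_congr fun m => ?_
  unfold expc
  rw [div_mul_eq_mul_div, ← mul_pow]
  ring_nf

lemma summable_norm_lagc (n l : ℕ) (r : ℝ) :
    Summable fun i => ‖lagc n l i * r ^ i‖ := by
  apply summable_of_ne_finset_zero (s := Finset.range (n - l - 1 + 1))
  intro i hi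
  rw [Finset.mem_range, Nat.lt_add_one_iff, not_le] at hi
  simp [lagc, Nat.not_le.mpr hi]

lemma summable_norm_expc (n : ℕ) (r : ℝ) :
    Summable fun m => ‖expc n m * r ^ m‖ := by
  have : (fun m => ‖expc n m * r ^ m‖) = fun m => |(-(1 : ℝ) / n) * r| ^ m / m.factorial := by
    funext m
    unfold expc
    rw [div_mul_eq_mul_div, ← mul_pow, Real.norm_eq_abs, abs_div, abs_pow, Nat.abs_cast]
  rw [this]
  exact Real.summable_pow_div_factorial _

/-- The key factorial identity for the coefficients. -/
lemma coef_identity (n l j : ℕ) (hn : l < n) :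
    coulombA n l * ∑ i ∈ Finset.range (j + 1), lagc n l i * expc n (j - i) = dcoef n l j := by
  set k := n - l - 1 with hk
  have hN : (0 : ℝ) < n := by exact_mod_cast (show 0 < n by omega)
  unfold dcoef Ssum
  rw [Finset.mul_sum, Finset.mul_sum]
  refine Finset.sum_congr rfl ?_
  intro i hi
  rw [Finset.mem_range, Nat.lt_add_one_iff] at hi
  by_cases hik : i ≤ k
  · unfold coulombA lagc expc
    rw [if_pos hik]
    have hkα : k + (2 * l + 1) = n + l := by omega
    have hsub : k + (2 * l + 1) - (k - i) = 2 * l + 1 + i := by omega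
    have hchoose : (((k + (2 * l + 1)).choose (k - i) : ℝ)) =
        ((n + l).factorial : ℝ) / ((k - i).factorial * (2 * l + 1 + i).factorial) := by
      rw [Nat.cast_choose ℝ (by omega), hsub, hkα]
    have hdesc : ((k.descFactorial i : ℝ)) = (k.factorial : ℝ) / ((k - i).factorial : ℝ) := by
      rw [eq_div_iff (fact_ne _), mul_comm]
      exact_mod_cast Nat.factorial_mul_descFactorial hik
    rw [hchoose, hdesc]
    have h1 : ((-1 : ℝ)) ^ i * (-1 : ℝ) ^ (j - i) = (-1) ^ j := by
      rw [← pow_add]; congr 1; omega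
    have h2 : ((n : ℝ)) ^ (j - i) * (n : ℝ) ^ i = (n : ℝ) ^ j := by
      rw [← pow_add]; congr 1; omega
    rw [← h1, ← h2, div_pow, div_pow, ← hk]
    have h3 : ((n + l).factorial : ℝ) ≠ 0 := fact_ne _
    have h4 : ((k - i).factorial : ℝ) ≠ 0 := fact_ne _
    have h5 : ((2 * l + 1 + i).factorial : ℝ) ≠ 0 := fact_ne _
    have h6 : ((i).factorial : ℝ) ≠ 0 := fact_ne _
    have h7 : ((j - i).factorial : ℝ) ≠ 0 := fact_ne _
    have h8 : (k.factorial : ℝ) ≠ 0 := fact_ne _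
    have hN' : (n : ℝ) ≠ 0 := hN.ne'
    field_simp
  · have h1 : lagc n l i = 0 := by rw [lagc, if_neg (by omega)]
    have h2 : (k.descFactorial i : ℝ) = 0 := by
      rw [Nat.descFactorial_eq_zero_iff_lt.mpr (by omega)]
      norm_num
    rw [h1, h2]
    ring


/-- `fnl` as a power series in `r`. -/
lemma fnl_tsum (n l : ℕ) (hn : l < n) (r : ℝ) :
    fnl n l r = ∑' j, dcoef n l j * r ^ (j + l) := by
  unfold fnl
  rw [laguerre_tsum, exp_tsum]
  have hprod := tsum_mul_tsum_eq_tsum_sum_range_of_summable_norm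
    (summable_norm_lagc n l r) (summable_norm_expc n r)
  calc coulombA n l * (∑' m, expc n m * r ^ m) * r ^ l * (∑' i, lagc n l i * r ^ i)
      = (coulombA n l * r ^ l) *
        ((∑' i, lagc n l i * r ^ i) * (∑' m, expc n m * r ^ m)) := by ring
    _ = (coulombA n l * r ^ l) * ∑' j, ∑ i ∈ Finset.range (j + 1),
          (lagc n l i * r ^ i) * (expc n (j - i) * r ^ (j - i)) := by rw [hprod]
    _ = ∑' j, dcoef n l j * r ^ (j + l) := by
        rw [← tsum_mul_left]
        refine tsum_congr fun j => ?_
        have hin : ∑ i ∈ Finset.range (j + 1), (lagc n l i * r ^ i) * (expc n (j - i) * r ^ (j - i))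
            = (∑ i ∈ Finset.range (j + 1), lagc n l i * expc n (j - i)) * r ^ j := by
          rw [Finset.sum_mul]
          refine Finset.sum_congr rfl fun i hi => ?_
          rw [Finset.mem_range, Nat.lt_add_one_iff] at hi
          have hrr : r ^ i * r ^ (j - i) = r ^ j := by rw [← pow_add]; congr 1; omega
          calc lagc n l i * r ^ i * (expc n (j - i) * r ^ (j - i))
              = lagc n l i * expc n (j - i) * (r ^ i * r ^ (j - i)) := by ring
            _ = lagc n l i * expc n (j - i) * r ^ j := by rw [hrr]
        rw [hin, pow_add]
        have := coef_identity n l j hn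
        calc coulombA n l * r ^ l *
              ((∑ i ∈ Finset.range (j + 1), lagc n l i * expc n (j - i)) * r ^ j)
            = (coulombA n l * ∑ i ∈ Finset.range (j + 1), lagc n l i * expc n (j - i))
                * (r ^ j * r ^ l) := by ring
          _ = dcoef n l j * (r ^ j * r ^ l) := by rw [this]

/-- `besselProfile` as a power series in `r`. -/
lemma besselProfile_tsum (l : ℕ) (r : ℝ) (hr : 0 < r) :
    besselProfile l r = ∑' j, bcoef l j * r ^ (j + l) := by
  have h8 : (0:ℝ) < 8 * r := by linarith
  have hs : (0:ℝ) < Real.sqrt (8 * r) := Real.sqrt_pos.mpr h8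
  have hs2 : Real.sqrt (8 * r) ^ 2 = 8 * r := Real.sq_sqrt h8.le
  unfold besselProfile besselJ
  rw [← tsum_div_const]
  refine tsum_congr fun j => ?_
  set s := Real.sqrt (8 * r) with hsdef
  have h24 : (s / 2) ^ 2 = 2 * r := by rw [div_pow, hs2]; ring
  have hpow : (s / 2) ^ (2 * j + (2 * l + 1)) = (2 * r) ^ (j + l) * (s / 2) := by
    have he : 2 * j + (2 * l + 1) = 2 * (j + l) + 1 := by ring
    rw [he, pow_succ, pow_mul, h24]
  rw [hpow]
  unfold bcoef
  have hfac : j + (2 * l + 1) = j + 2 * l + 1 := by ring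
  rw [hfac]
  have hc : (2 : ℝ) ^ ((l : ℤ) - 1) = 2 ^ l / 2 := by
    rw [zpow_sub₀ (two_ne_zero), zpow_one, zpow_natCast]
  rw [hc, mul_pow, pow_add, show ((-2:ℝ)) ^ j = (-1) ^ j * 2 ^ j by rw [← neg_one_mul, mul_pow]]
  have hjf := fact_ne j
  have hjf2 := fact_ne (j + 2 * l + 1)
  field_simp

lemma dcoef_zero (n l : ℕ) : dcoef n l 0 = bcoef l 0 := by
  unfold dcoef bcoef Ssum
  simp [Nat.factorial]
  rw [div_eq_mul_inv, mul_inv]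
  ring

lemma dcoef_one (n l : ℕ) (hn : l < n) : dcoef n l 1 = bcoef l 1 := by
  have hN : (0:ℝ) < n := by exact_mod_cast (show 0 < n by omega)
  unfold dcoef bcoef Ssum
  rw [Finset.sum_range_succ, Finset.sum_range_succ, Finset.range_zero, Finset.sum_empty]
  have hd1 : ((n - l - 1).descFactorial 1 : ℝ) = (n : ℝ) - l - 1 := by
    rw [Nat.descFactorial_one, Nat.cast_sub (show 1 ≤ n - l by omega),
      Nat.cast_sub (show l ≤ n by omega), Nat.cast_one]
  have e1 : 2 * l + 1 + 1 = 2 * l + 2 := by omega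
  have e2 : 1 + 2 * l + 1 = 2 * l + 2 := by omega
  have e3 : (1:ℕ) - 1 = 0 := rfl
  have e4 : (1:ℕ) - 0 = 1 := rfl
  rw [hd1, e1, e2, e3, e4]
  have hf1 : ((2 * l + 2).factorial : ℝ) = (2 * l + 2) * (2 * l + 1).factorial := by
    rw [show 2 * l + 2 = (2 * l + 1) + 1 by omega, Nat.factorial_succ]
    push_cast; ring
  rw [hf1]
  have h1 := fact_ne (2 * l + 1)
  have hN' : (n : ℝ) ≠ 0 := hN.ne'
  simp only [Nat.descFactorial_zero, Nat.factorial_zero, Nat.factorial_one, Nat.cast_one, pow_zero, pow_one]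
  field_simp
  ring


lemma prod_one_sub_bounds (s : Finset ℕ) (u : ℕ → ℝ) (h0 : ∀ t ∈ s, 0 ≤ u t)
    (h1 : ∀ t ∈ s, u t ≤ 1) :
    0 ≤ ∏ t ∈ s, (1 - u t) ∧ (∏ t ∈ s, (1 - u t)) ≤ 1 ∧
    1 - ∑ t ∈ s, u t ≤ ∏ t ∈ s, (1 - u t) ∧
    (∏ t ∈ s, (1 - u t)) ≤ 1 - (∑ t ∈ s, u t) + (∑ t ∈ s, u t) ^ 2 / 2 := by
  classical
  induction s using Finset.induction_on with
  | empty => norm_num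
  | @insert a s ha ih =>
    have h0a : 0 ≤ u a := h0 a (Finset.mem_insert_self a s)
    have h1a : u a ≤ 1 := h1 a (Finset.mem_insert_self a s)
    have h0' : ∀ t ∈ s, 0 ≤ u t := fun t ht => h0 t (Finset.mem_insert_of_mem ht)
    have h1' : ∀ t ∈ s, u t ≤ 1 := fun t ht => h1 t (Finset.mem_insert_of_mem ht)
    obtain ⟨hP0, hP1, hPl, hPu⟩ := ih h0' h1'
    rw [Finset.prod_insert ha, Finset.sum_insert ha]
    have hS0 : 0 ≤ ∑ t ∈ s, u t := Finset.sum_nonneg h0'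
    refine ⟨mul_nonneg (by linarith) hP0, ?_, ?_, ?_⟩
    · nlinarith
    · nlinarith [mul_le_mul_of_nonneg_left hPl (show (0:ℝ) ≤ 1 - u a by linarith),
        mul_nonneg h0a hS0]
    · nlinarith [mul_le_mul_of_nonneg_left hPu (show (0:ℝ) ≤ 1 - u a by linarith),
        mul_nonneg h0a (mul_nonneg hS0 hS0), sq_nonneg (u a)]

lemma sum_u (l n : ℕ) (hn : (0:ℝ) < n) (i : ℕ) :
    ∑ t ∈ Finset.range i, (((l : ℝ) + 1 + t) / n) = (i * (2 * l + i + 1)) / (2 * n) := by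
  induction i with
  | zero => simp
  | succ i ih =>
    rw [Finset.sum_range_succ, ih]
    have hn' : (n:ℝ) ≠ 0 := hn.ne'
    push_cast
    field_simp
    ring

lemma binom_sum (j : ℕ) :
    ∑ i ∈ Finset.range (j + 1), (2:ℝ) ^ i / (i.factorial * (j - i).factorial)
      = 3 ^ j / j.factorial := by
  have h : ∀ i ∈ Finset.range (j + 1), (2:ℝ) ^ i / (i.factorial * (j - i).factorial)
      = (j.choose i) * 2 ^ i / j.factorial := by
    intro i hi
    rw [Finset.mem_range, Nat.lt_add_one_iff] at hi
    rw [Nat.cast_choose ℝ hi]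
    have h1 := fact_ne i
    have h2 := fact_ne (j - i)
    have h3 := fact_ne j
    field_simp
  rw [Finset.sum_congr rfl h, ← Finset.sum_div]
  congr 1
  have := add_pow (2:ℝ) 1 j
  norm_num at this
  rw [this]
  exact Finset.sum_congr rfl fun i _ => by ring

/-- The crude term bound. -/
lemma term_bound (n l j i : ℕ) (hn : l < n) (hi : i ≤ j) :
    2 ^ i * ((n - l - 1).descFactorial i : ℝ)
        / ((i.factorial : ℝ) * (j - i).factorial * (2 * l + 1 + i).factorial) / (n:ℝ) ^ j
      ≤ (2:ℝ) ^ i / ((i.factorial : ℝ) * (j - i).factorial) := by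
  have hN1 : (1:ℝ) ≤ n := by exact_mod_cast (show 1 ≤ n by omega)
  have hN0 : (0:ℝ) < n := by linarith
  have hD : ((n - l - 1).descFactorial i : ℝ) ≤ (n:ℝ) ^ j := by
    calc ((n - l - 1).descFactorial i : ℝ) ≤ (n:ℝ) ^ i := by
          exact_mod_cast le_trans (Nat.descFactorial_le_pow _ _)
            (Nat.pow_le_pow_left (by omega) i)
      _ ≤ (n:ℝ) ^ j := pow_le_pow_right₀ hN1 hi
  have key : 2 ^ i * ((n - l - 1).descFactorial i : ℝ)
        / ((i.factorial : ℝ) * (j - i).factorial * (2 * l + 1 + i).factorial) / (n:ℝ) ^ j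
      = ((2:ℝ) ^ i / ((i.factorial : ℝ) * (j - i).factorial))
          * (((n - l - 1).descFactorial i : ℝ) / ((2 * l + 1 + i).factorial * (n:ℝ) ^ j)) := by
    ring
  rw [key]
  have hfr : ((n - l - 1).descFactorial i : ℝ) / ((2 * l + 1 + i).factorial * (n:ℝ) ^ j) ≤ 1 := by
    rw [div_le_one (by positivity)]
    calc ((n - l - 1).descFactorial i : ℝ) ≤ (n:ℝ) ^ j := hD
      _ ≤ ((2 * l + 1 + i).factorial : ℝ) * (n:ℝ) ^ j := by
          nlinarith [one_le_fact (2 * l + 1 + i), pow_pos hN0 j]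
  have hpos : (0:ℝ) ≤ (2:ℝ) ^ i / ((i.factorial : ℝ) * (j - i).factorial) := by positivity
  nlinarith [mul_nonneg hpos (show (0:ℝ) ≤ ((n - l - 1).descFactorial i : ℝ)
      / ((2 * l + 1 + i).factorial * (n:ℝ) ^ j) by positivity)]


/-- Refined term bound with an extra `n²`. -/
lemma term_bound2 (n l j i : ℕ) (hn : l < n) (hi : i + 2 ≤ j) :
    2 ^ i * ((n - l - 1).descFactorial i : ℝ)
        / ((i.factorial : ℝ) * (j - i).factorial * (2 * l + 1 + i).factorial) / (n:ℝ) ^ j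
      ≤ (2:ℝ) ^ i / ((i.factorial : ℝ) * (j - i).factorial) / (n:ℝ) ^ 2 := by
  have hN1 : (1:ℝ) ≤ n := by exact_mod_cast (show 1 ≤ n by omega)
  have hN0 : (0:ℝ) < n := by linarith
  have hD : ((n - l - 1).descFactorial i : ℝ) * (n:ℝ) ^ 2 ≤ (n:ℝ) ^ j := by
    have h1 : ((n - l - 1).descFactorial i : ℝ) ≤ (n:ℝ) ^ i := by
      exact_mod_cast le_trans (Nat.descFactorial_le_pow _ _)
        (Nat.pow_le_pow_left (by omega) i)
    calc ((n - l - 1).descFactorial i : ℝ) * (n:ℝ) ^ 2 ≤ (n:ℝ) ^ i * (n:ℝ) ^ 2 := by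
          nlinarith [pow_pos hN0 2]
      _ = (n:ℝ) ^ (i + 2) := by rw [pow_add]
      _ ≤ (n:ℝ) ^ j := pow_le_pow_right₀ hN1 hi
  have key : 2 ^ i * ((n - l - 1).descFactorial i : ℝ)
        / ((i.factorial : ℝ) * (j - i).factorial * (2 * l + 1 + i).factorial) / (n:ℝ) ^ j
      = ((2:ℝ) ^ i / ((i.factorial : ℝ) * (j - i).factorial))
          * (((n - l - 1).descFactorial i : ℝ) / ((2 * l + 1 + i).factorial * (n:ℝ) ^ j)) := by
    ring
  have key2 : (2:ℝ) ^ i / ((i.factorial : ℝ) * (j - i).factorial) / (n:ℝ) ^ 2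
      = ((2:ℝ) ^ i / ((i.factorial : ℝ) * (j - i).factorial)) * ((1:ℝ) / (n:ℝ) ^ 2) := by
    ring
  rw [key, key2]
  have hfr : ((n - l - 1).descFactorial i : ℝ) / ((2 * l + 1 + i).factorial * (n:ℝ) ^ j)
      ≤ 1 / (n:ℝ) ^ 2 := by
    rw [div_le_div_iff₀ (by positivity) (by positivity)]
    nlinarith [hD, one_le_fact (2 * l + 1 + i), pow_pos hN0 j]
  exact mul_le_mul_of_nonneg_left hfr (by positivity)

lemma absY_bound (A1 A2 P1 P2 : ℝ) (hP1b : P1 ≤ 1) (hP1c : 1 - A1 ≤ P1)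
    (hP2c : 1 - A2 ≤ P2) (hP2d : P2 ≤ 1 - A2 + A2 ^ 2 / 2)
    (hA10 : 0 ≤ A1) (hA20 : 0 ≤ A2) (hA12 : A1 ≤ A2) :
    |A2 * P1 + P2 - 1| ≤ 3 / 2 * A2 ^ 2 := by
  rw [abs_le]
  constructor
  · nlinarith [mul_le_mul_of_nonneg_left hP1c hA20,
      mul_le_mul_of_nonneg_left hA12 hA20, sq_nonneg A2]
  · nlinarith [mul_le_mul_of_nonneg_left hP1b hA20, sq_nonneg A2]

lemma aux_jl_le (jr lr : ℝ) (hj : 2 ≤ jr) (hl : 0 ≤ lr) :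
    jr + lr ≤ jr * (2 * lr + jr + 1) := by nlinarith

lemma abs_sub_le_twice (x t B : ℝ) (hx0 : 0 ≤ x) (hxB : x ≤ B) (ht0 : 0 ≤ t) (htB : t ≤ B) :
    |x - t| ≤ 2 * B := by
  rw [abs_le]
  constructor <;> linarith

set_option maxHeartbeats 2000000 in
/-- The central coefficient estimate. -/
lemma Ebound (n l j : ℕ) (hn : l < n) (hj : 2 ≤ j) :
    |Ssum n l j / (n:ℝ) ^ j - 2 ^ j / ((j.factorial : ℝ) * (j + 2 * l + 1).factorial)|
      ≤ 2 * 3 ^ j * ((j : ℝ) * (2 * l + j + 1)) ^ 2 / ((j.factorial : ℝ) * (n:ℝ) ^ 2) := by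
  have hN1 : (1:ℝ) ≤ n := by exact_mod_cast (show 1 ≤ n by omega)
  have hN0 : (0:ℝ) < n := by linarith
  have hNj : (0:ℝ) < (n:ℝ) ^ j := pow_pos hN0 j
  have hN2 : (0:ℝ) < (n:ℝ) ^ 2 := pow_pos hN0 2
  have hjf := fact_pos j
  have hN' : (n:ℝ) ≠ 0 := hN0.ne'
  set t : ℝ := 2 ^ j / ((j.factorial : ℝ) * (j + 2 * l + 1).factorial) with htdef
  have ht0 : 0 ≤ t := by positivity
  have ht3 : t ≤ 2 ^ j / (j.factorial : ℝ) := by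
    rw [htdef, div_le_div_iff₀ (by positivity) hjf]
    nlinarith [mul_le_mul_of_nonneg_left (one_le_fact (j + 2 * l + 1))
      (show (0:ℝ) ≤ 2 ^ j * (j.factorial : ℝ) by positivity)]
  have hX1 : (1:ℝ) ≤ (j:ℝ) * (2 * l + j + 1) := by
    have hnat : 1 ≤ j * (2 * l + j + 1) := Nat.mul_pos (by omega) (by omega)
    exact_mod_cast hnat
  have h23 : (2:ℝ) ^ j ≤ 3 ^ j := pow_le_pow_left₀ (by norm_num) (by norm_num) j
  have h3pos : (0:ℝ) < (3:ℝ) ^ j := by positivity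
  have hSsum_div : Ssum n l j / (n:ℝ) ^ j
      = ∑ i ∈ Finset.range (j + 1),
          2 ^ i * ((n - l - 1).descFactorial i : ℝ)
            / ((i.factorial : ℝ) * (j - i).factorial * (2 * l + 1 + i).factorial)
            / (n:ℝ) ^ j := by
    rw [Ssum, Finset.sum_div]
  by_cases hjk : j ≤ n - l - 1
  · -- main case : j ≤ n - l - 1
    obtain ⟨m, rfl⟩ : ∃ m, j = m + 2 := ⟨j - 2, by omega⟩
    set u : ℕ → ℝ := fun t => ((l:ℝ) + 1 + t) / n with hu
    have hu0 : ∀ t : ℕ, 0 ≤ u t := fun t => by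
      rw [hu]; positivity
    have hu1 : ∀ t ∈ Finset.range (m + 2), u t ≤ 1 := by
      intro t ht
      rw [Finset.mem_range] at ht
      rw [hu]
      simp only
      rw [div_le_one hN0]
      have : l + 1 + t ≤ n := by omega
      exact_mod_cast this
    have hD : ∀ i, i ≤ m + 2 →
        ((n - l - 1).descFactorial i : ℝ) = (n:ℝ) ^ i * ∏ x ∈ Finset.range i, (1 - u x) := by
      intro i hi
      have hcast : ∀ x ∈ Finset.range i, ((n - l - 1 - x : ℕ) : ℝ) = (n:ℝ) * (1 - u x) := by
        intro x hx
        rw [Finset.mem_range] at hx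
        have hxk : x ≤ n - l - 1 := by omega
        rw [Nat.cast_sub hxk, Nat.cast_sub (show 1 ≤ n - l by omega),
          Nat.cast_sub (show l ≤ n by omega), Nat.cast_one, hu]
        simp only
        field_simp
        ring
      calc ((n - l - 1).descFactorial i : ℝ)
          = ((∏ x ∈ Finset.range i, (n - l - 1 - x) : ℕ) : ℝ) := by
            rw [Nat.descFactorial_eq_prod_range]
        _ = ∏ x ∈ Finset.range i, ((n - l - 1 - x : ℕ) : ℝ) := Nat.cast_prod _ _
        _ = ∏ x ∈ Finset.range i, ((n:ℝ) * (1 - u x)) := Finset.prod_congr rfl hcast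
        _ = (n:ℝ) ^ i * ∏ x ∈ Finset.range i, (1 - u x) := by
            rw [Finset.prod_mul_distrib, Finset.prod_const, Finset.card_range]
    set P1 : ℝ := ∏ x ∈ Finset.range (m + 1), (1 - u x) with hP1
    set P2 : ℝ := ∏ x ∈ Finset.range (m + 2), (1 - u x) with hP2
    set A1 : ℝ := ∑ x ∈ Finset.range (m + 1), u x with hA1
    set A2 : ℝ := ∑ x ∈ Finset.range (m + 2), u x with hA2
    obtain ⟨hP1a, hP1b, hP1c, hP1d⟩ := prod_one_sub_bounds (Finset.range (m + 1)) u
      (fun x _ => hu0 x)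
      (fun x hx => hu1 x (Finset.mem_of_subset
        (Finset.range_subset_range.mpr (by omega)) hx))
    obtain ⟨hP2a, hP2b, hP2c, hP2d⟩ := prod_one_sub_bounds (Finset.range (m + 2)) u
      (fun x _ => hu0 x) hu1
    rw [← hP1] at hP1a hP1b hP1c hP1d
    rw [← hA1] at hP1c hP1d
    rw [← hP2] at hP2a hP2b hP2c hP2d
    rw [← hA2] at hP2c hP2d
    have hA10 : 0 ≤ A1 := by rw [hA1]; exact Finset.sum_nonneg fun x _ => hu0 x
    have hA20 : 0 ≤ A2 := by rw [hA2]; exact Finset.sum_nonneg fun x _ => hu0 x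
    have hstep : A2 = A1 + u (m + 1) := by
      rw [hA2, hA1]
      exact Finset.sum_range_succ _ _
    have hA12 : A1 ≤ A2 := by
      rw [hstep]
      exact le_add_of_nonneg_right (hu0 (m + 1))
    have hA2X : A2 = ((m + 2 : ℕ) : ℝ) * (2 * (l:ℝ) + ((m + 2 : ℕ) : ℝ) + 1) / (2 * n) := by
      rw [hA2, hu]
      have := sum_u l n hN0 (m + 2)
      push_cast at this ⊢
      convert this using 2
      try ring
    -- the two top terms
    have hTm2 : 2 ^ (m + 2) * ((n - l - 1).descFactorial (m + 2) : ℝ)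
            / (((m + 2).factorial : ℝ) * (m + 2 - (m + 2)).factorial
              * (2 * l + 1 + (m + 2)).factorial) / (n:ℝ) ^ (m + 2)
        = t * P2 := by
      rw [hD (m + 2) le_rfl, show m + 2 - (m + 2) = 0 from by omega,
        show 2 * l + 1 + (m + 2) = m + 2 + 2 * l + 1 from by omega, htdef, hP2]
      have h1 := fact_ne (m + 2)
      have h2 := fact_ne (m + 2 + 2 * l + 1)
      field_simp [Nat.factorial_zero]
      ring
    have hTm1 : 2 ^ (m + 1) * ((n - l - 1).descFactorial (m + 1) : ℝ)
            / (((m + 1).factorial : ℝ) * (m + 2 - (m + 1)).factorial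
              * (2 * l + 1 + (m + 1)).factorial) / (n:ℝ) ^ (m + 2)
        = t * (A2 * P1) := by
      rw [hD (m + 1) (by omega), show m + 2 - (m + 1) = 1 from by omega, htdef, hP1, hA2X]
      have hf1 : (((m + 2).factorial : ℕ) : ℝ) = ((m:ℝ) + 2) * ((m + 1).factorial : ℝ) := by
        rw [show m + 2 = (m + 1) + 1 from rfl, Nat.factorial_succ]
        push_cast
        ring
      have hf2 : (((m + 2 + 2 * l + 1).factorial : ℕ) : ℝ)
          = (2 * (l:ℝ) + (m:ℝ) + 3) * ((2 * l + 1 + (m + 1)).factorial : ℝ) := by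
        rw [show m + 2 + 2 * l + 1 = (2 * l + 1 + (m + 1)) + 1 from by omega, Nat.factorial_succ]
        push_cast
        ring
      rw [hf1, hf2]
      have h1 := fact_ne (m + 1)
      have h2 := fact_ne (2 * l + 1 + (m + 1))
      have h3 := fact_ne 1
      push_cast
      field_simp
      ring
    have key : Ssum n l (m + 2) / (n:ℝ) ^ (m + 2) - t
        = (∑ i ∈ Finset.range (m + 1),
            2 ^ i * ((n - l - 1).descFactorial i : ℝ)
              / ((i.factorial : ℝ) * (m + 2 - i).factorial * (2 * l + 1 + i).factorial)
              / (n:ℝ) ^ (m + 2))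
          + t * (A2 * P1 + P2 - 1) := by
      rw [hSsum_div, Finset.sum_range_succ, Finset.sum_range_succ, hTm1, hTm2]
      ring
    have habsY : |A2 * P1 + P2 - 1| ≤ 3 / 2 * A2 ^ 2 :=
      absY_bound A1 A2 P1 P2 hP1b hP1c hP2c hP2d hA10 hA20 hA12
    have hsum_small : ∑ i ∈ Finset.range (m + 1),
            2 ^ i * ((n - l - 1).descFactorial i : ℝ)
              / ((i.factorial : ℝ) * (m + 2 - i).factorial * (2 * l + 1 + i).factorial)
              / (n:ℝ) ^ (m + 2)
          ≤ 3 ^ (m + 2) / (((m + 2).factorial : ℝ) * (n:ℝ) ^ 2) := by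
      calc ∑ i ∈ Finset.range (m + 1),
            2 ^ i * ((n - l - 1).descFactorial i : ℝ)
              / ((i.factorial : ℝ) * (m + 2 - i).factorial * (2 * l + 1 + i).factorial)
              / (n:ℝ) ^ (m + 2)
          ≤ ∑ i ∈ Finset.range (m + 1),
              (2:ℝ) ^ i / ((i.factorial : ℝ) * (m + 2 - i).factorial) / (n:ℝ) ^ 2 := by
            refine Finset.sum_le_sum fun i hi => ?_
            rw [Finset.mem_range] at hi
            exact term_bound2 n l (m + 2) i hn (by omega)
        _ = (∑ i ∈ Finset.range (m + 1),
              (2:ℝ) ^ i / ((i.factorial : ℝ) * (m + 2 - i).factorial)) / (n:ℝ) ^ 2 := by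
            rw [Finset.sum_div]
        _ ≤ (∑ i ∈ Finset.range (m + 2 + 1),
              (2:ℝ) ^ i / ((i.factorial : ℝ) * (m + 2 - i).factorial)) / (n:ℝ) ^ 2 := by
            refine (div_le_div_iff_of_pos_right hN2).mpr ?_
            exact Finset.sum_le_sum_of_subset_of_nonneg
              (Finset.range_subset_range.mpr (by omega)) (fun i _ _ => by positivity)
        _ = 3 ^ (m + 2) / (((m + 2).factorial : ℝ) * (n:ℝ) ^ 2) := by
            rw [binom_sum (m + 2)]
            ring
    have hsum_nonneg : 0 ≤ ∑ i ∈ Finset.range (m + 1),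
            2 ^ i * ((n - l - 1).descFactorial i : ℝ)
              / ((i.factorial : ℝ) * (m + 2 - i).factorial * (2 * l + 1 + i).factorial)
              / (n:ℝ) ^ (m + 2) :=
      Finset.sum_nonneg fun i _ => by positivity
    -- assemble
    set X : ℝ := ((m + 2 : ℕ) : ℝ) * (2 * (l:ℝ) + ((m + 2 : ℕ) : ℝ) + 1) with hXdef
    have hA2sq : A2 ^ 2 = X ^ 2 / (4 * (n:ℝ) ^ 2) := by
      rw [hA2X, hXdef]
      field_simp
      ring
    have hX1' : (1:ℝ) ≤ X := by
      rw [hXdef]; exact hX1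
    have hmain : t * (3 / 2 * A2 ^ 2) ≤ 3 / 8 * 2 ^ (m + 2) * X ^ 2
        / (((m + 2).factorial : ℝ) * (n:ℝ) ^ 2) := by
      rw [hA2sq]
      have hb : t * X ^ 2 ≤ 2 ^ (m + 2) / (((m + 2).factorial : ℝ)) * X ^ 2 :=
        mul_le_mul_of_nonneg_right ht3 (sq_nonneg X)
      have hrw : t * (3 / 2 * (X ^ 2 / (4 * (n:ℝ) ^ 2)))
          = t * X ^ 2 * (3 / (8 * (n:ℝ) ^ 2)) := by ring
      rw [hrw]
      calc t * X ^ 2 * (3 / (8 * (n:ℝ) ^ 2))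
          ≤ 2 ^ (m + 2) / (((m + 2).factorial : ℝ)) * X ^ 2 * (3 / (8 * (n:ℝ) ^ 2)) := by
            exact mul_le_mul_of_nonneg_right hb (by positivity)
        _ = 3 / 8 * 2 ^ (m + 2) * X ^ 2 / (((m + 2).factorial : ℝ) * (n:ℝ) ^ 2) := by
            field_simp
    have hcoef : 3 ^ (m + 2) + 3 / 8 * 2 ^ (m + 2) * X ^ 2 ≤ 2 * 3 ^ (m + 2) * X ^ 2 := by
      have hX2 : (1:ℝ) ≤ X ^ 2 := by
        calc (1:ℝ) = 1 * 1 := by ring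
          _ ≤ X * X := mul_le_mul hX1' hX1' zero_le_one (by linarith)
          _ = X ^ 2 := by ring
      have h1 : (3:ℝ) ^ (m + 2) ≤ 3 ^ (m + 2) * X ^ 2 := le_mul_of_one_le_right h3pos.le hX2
      have h2 : (3:ℝ) / 8 * 2 ^ (m + 2) * X ^ 2 ≤ 3 ^ (m + 2) * X ^ 2 := by
        have h2a := mul_le_mul_of_nonneg_right h23 (sq_nonneg X)
        have h2b : (0:ℝ) ≤ 2 ^ (m + 2) * X ^ 2 := mul_nonneg (by positivity) (sq_nonneg X)
        calc (3:ℝ) / 8 * 2 ^ (m + 2) * X ^ 2 ≤ 2 ^ (m + 2) * X ^ 2 := by linarith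
          _ ≤ 3 ^ (m + 2) * X ^ 2 := h2a
      calc 3 ^ (m + 2) + 3 / 8 * 2 ^ (m + 2) * X ^ 2
          ≤ 3 ^ (m + 2) * X ^ 2 + 3 ^ (m + 2) * X ^ 2 := add_le_add h1 h2
        _ = 2 * 3 ^ (m + 2) * X ^ 2 := by ring
    calc |Ssum n l (m + 2) / (n:ℝ) ^ (m + 2) - t|
        = |(∑ i ∈ Finset.range (m + 1),
            2 ^ i * ((n - l - 1).descFactorial i : ℝ)
              / ((i.factorial : ℝ) * (m + 2 - i).factorial * (2 * l + 1 + i).factorial)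
              / (n:ℝ) ^ (m + 2))
          + t * (A2 * P1 + P2 - 1)| := by rw [key]
      _ ≤ |∑ i ∈ Finset.range (m + 1),
            2 ^ i * ((n - l - 1).descFactorial i : ℝ)
              / ((i.factorial : ℝ) * (m + 2 - i).factorial * (2 * l + 1 + i).factorial)
              / (n:ℝ) ^ (m + 2)|
          + |t * (A2 * P1 + P2 - 1)| := abs_add_le _ _
      _ ≤ 3 ^ (m + 2) / (((m + 2).factorial : ℝ) * (n:ℝ) ^ 2)
          + 3 / 8 * 2 ^ (m + 2) * X ^ 2 / (((m + 2).factorial : ℝ) * (n:ℝ) ^ 2) := by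
          have h1 : |∑ i ∈ Finset.range (m + 1),
              2 ^ i * ((n - l - 1).descFactorial i : ℝ)
                / ((i.factorial : ℝ) * (m + 2 - i).factorial * (2 * l + 1 + i).factorial)
                / (n:ℝ) ^ (m + 2)|
              ≤ 3 ^ (m + 2) / (((m + 2).factorial : ℝ) * (n:ℝ) ^ 2) := by
            rw [abs_of_nonneg hsum_nonneg]
            exact hsum_small
          have h2 : |t * (A2 * P1 + P2 - 1)| ≤ 3 / 8 * 2 ^ (m + 2) * X ^ 2
              / (((m + 2).factorial : ℝ) * (n:ℝ) ^ 2) := by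
            rw [abs_mul, abs_of_nonneg ht0]
            calc t * |A2 * P1 + P2 - 1| ≤ t * (3 / 2 * A2 ^ 2) :=
                mul_le_mul_of_nonneg_left habsY ht0
              _ ≤ _ := hmain
          exact add_le_add h1 h2
      _ ≤ 2 * 3 ^ (m + 2) * ((↑(m + 2) : ℝ) * (2 * ↑l + ↑(m + 2) + 1)) ^ 2
            / (((m + 2).factorial : ℝ) * (n:ℝ) ^ 2) := by
          have hXg : X = (↑(m + 2) : ℝ) * (2 * ↑l + ↑(m + 2) + 1) := by rw [hXdef]
          rw [← hXg, ← add_div]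
          gcongr
  · -- small n case
    have hcrude : Ssum n l j / (n:ℝ) ^ j ≤ 3 ^ j / (j.factorial : ℝ) := by
      rw [hSsum_div, ← binom_sum j]
      refine Finset.sum_le_sum fun i hi => ?_
      rw [Finset.mem_range, Nat.lt_add_one_iff] at hi
      exact term_bound n l j i hn hi
    have hnon : 0 ≤ Ssum n l j / (n:ℝ) ^ j := by
      rw [hSsum_div]
      exact Finset.sum_nonneg fun i _ => by positivity
    have ht3' : t ≤ 3 ^ j / (j.factorial : ℝ) := le_trans ht3 (by gcongr)
    have habs : |Ssum n l j / (n:ℝ) ^ j - t| ≤ 2 * (3 ^ j / (j.factorial : ℝ)) :=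
      abs_sub_le_twice _ _ _ hnon hcrude ht0 ht3'
    have hNle : (n:ℝ) ≤ (j:ℝ) * (2 * l + j + 1) := by
      have h1 : (n:ℝ) ≤ (j:ℝ) + l := by exact_mod_cast (show n ≤ j + l by omega)
      have hj2 : (2:ℝ) ≤ (j:ℝ) := by exact_mod_cast hj
      have hl0 : (0:ℝ) ≤ (l:ℝ) := Nat.cast_nonneg l
      exact le_trans h1 (aux_jl_le _ _ hj2 hl0)
    calc |Ssum n l j / (n:ℝ) ^ j - t| ≤ 2 * 3 ^ j / (j.factorial : ℝ) := by
          rw [mul_div_assoc]; exact habs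
      _ ≤ 2 * 3 ^ j * ((j : ℝ) * (2 * l + j + 1)) ^ 2 / ((j.factorial : ℝ) * (n:ℝ) ^ 2) := by
          rw [div_le_div_iff₀ hjf (by positivity)]
          have hsq : (n:ℝ) ^ 2 ≤ ((j : ℝ) * (2 * l + j + 1)) ^ 2 :=
            pow_le_pow_left₀ hN0.le hNle 2
          calc 2 * 3 ^ j * ((j.factorial : ℝ) * (n:ℝ) ^ 2)
              = 2 * 3 ^ j * (j.factorial : ℝ) * (n:ℝ) ^ 2 := by ring
            _ ≤ 2 * 3 ^ j * (j.factorial : ℝ) * ((j : ℝ) * (2 * l + j + 1)) ^ 2 :=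
                mul_le_mul_of_nonneg_left hsq (by positivity)
            _ = 2 * 3 ^ j * ((j : ℝ) * (2 * l + j + 1)) ^ 2 * (j.factorial : ℝ) := by ring


lemma Ssum_nonneg (n l j : ℕ) : 0 ≤ Ssum n l j :=
  Finset.sum_nonneg fun i _ => by positivity

lemma Ssum_div_le (n l j : ℕ) (hn : l < n) :
    Ssum n l j / (n:ℝ) ^ j ≤ 3 ^ j / (j.factorial : ℝ) := by
  rw [Ssum, Finset.sum_div, ← binom_sum j]
  refine Finset.sum_le_sum fun i hi => ?_
  rw [Finset.mem_range, Nat.lt_add_one_iff] at hi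
  exact term_bound n l j i hn hi

lemma abs_dcoef_le (n l j : ℕ) (hn : l < n) :
    |dcoef n l j| ≤ (2:ℝ) ^ ((l : ℤ) - 1) * (3 ^ j / (j.factorial : ℝ)) := by
  have hN0 : (0:ℝ) < n := by exact_mod_cast (show 0 < n by omega)
  have h1 : |dcoef n l j| = (2:ℝ) ^ ((l : ℤ) - 1) * (Ssum n l j / (n:ℝ) ^ j) := by
    unfold dcoef
    rw [abs_mul, abs_div, abs_mul, abs_pow, abs_neg, abs_one, one_pow, mul_one,
      abs_pow, Nat.abs_cast, abs_of_pos (cpow_pos l), abs_of_nonneg (Ssum_nonneg n l j)]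
    ring
  rw [h1]
  exact mul_le_mul_of_nonneg_left (Ssum_div_le n l j hn) (cpow_pos l).le

lemma abs_bcoef_le (l j : ℕ) :
    |bcoef l j| ≤ (2:ℝ) ^ ((l : ℤ) - 1) * (2 ^ j / (j.factorial : ℝ)) := by
  have h1 : |bcoef l j| = (2:ℝ) ^ ((l : ℤ) - 1)
      * (2 ^ j / ((j.factorial : ℝ) * ((j + 2 * l + 1).factorial : ℝ))) := by
    unfold bcoef
    rw [abs_div, abs_mul, abs_pow, abs_neg, abs_of_pos (cpow_pos l),
      abs_of_nonneg (show (0:ℝ) ≤ 2 by norm_num),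
      abs_of_pos (by positivity : (0:ℝ) < (j.factorial : ℝ) * ((j + 2 * l + 1).factorial : ℝ))]
    ring
  rw [h1]
  refine mul_le_mul_of_nonneg_left ?_ (cpow_pos l).le
  rw [div_le_div_iff₀ (by positivity) (fact_pos j)]
  nlinarith [mul_le_mul_of_nonneg_left (one_le_fact (j + 2 * l + 1))
    (show (0:ℝ) ≤ 2 ^ j * (j.factorial : ℝ) by positivity), fact_pos j,
    pow_pos (show (0:ℝ) < 2 by norm_num) j]

lemma dcoef_sub_bcoef (n l j : ℕ) :
    |dcoef n l j - bcoef l j| = (2:ℝ) ^ ((l : ℤ) - 1)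
      * |Ssum n l j / (n:ℝ) ^ j - 2 ^ j / ((j.factorial : ℝ) * (j + 2 * l + 1).factorial)| := by
  have h1 : dcoef n l j - bcoef l j = (2:ℝ) ^ ((l : ℤ) - 1) * ((-1) ^ j
      * (Ssum n l j / (n:ℝ) ^ j
        - 2 ^ j / ((j.factorial : ℝ) * (j + 2 * l + 1).factorial))) := by
    unfold dcoef bcoef
    rw [show ((-2:ℝ)) ^ j = (-1) ^ j * 2 ^ j by rw [← neg_one_mul, mul_pow]]
    ring
  rw [h1, abs_mul, abs_mul, abs_pow, abs_neg, abs_one, one_pow, one_mul,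
    abs_of_pos (cpow_pos l)]

/-- The exponential majorant for the coefficient bounds. -/
lemma Gmaj (l m : ℕ) (M : ℝ) (hM : 0 ≤ M) :
    2 * 3 ^ (m + 2) * (((m + 2 : ℕ) : ℝ) * (2 * (l:ℝ) + ((m + 2 : ℕ) : ℝ) + 1)) ^ 2
        / (((m + 2).factorial : ℝ)) * M ^ m
      ≤ 432 * Real.exp 3 * (2 * (l:ℝ) + 1) ^ 2 * (3 * Real.exp 1 * M) ^ m
          / (m.factorial : ℝ) := by
  have hl0 : (0:ℝ) ≤ (l:ℝ) := Nat.cast_nonneg l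
  have hm0 : (0:ℝ) ≤ (m:ℝ) := Nat.cast_nonneg m
  have h4 : ((m:ℝ) + 3) ^ 4 ≤ 24 * Real.exp ((m:ℝ) + 3) := by
    have h := Real.pow_div_factorial_le_exp ((m:ℝ) + 3) (by positivity) 4
    norm_num [Nat.factorial] at h
    linarith
  have hexp : Real.exp ((m:ℝ) + 3) = Real.exp 3 * Real.exp 1 ^ m := by
    rw [show (m:ℝ) + 3 = 3 + (m:ℝ) * 1 by ring, Real.exp_add, Real.exp_nat_mul]
  have hY : ((m + 2 : ℕ) : ℝ) * (2 * (l:ℝ) + ((m + 2 : ℕ) : ℝ) + 1)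
      ≤ (2 * (l:ℝ) + 1) * ((m:ℝ) + 3) ^ 2 := by
    push_cast
    nlinarith [mul_nonneg hl0 hm0, mul_nonneg (mul_nonneg hl0 hm0) hm0]
  have hY0 : (0:ℝ) ≤ ((m + 2 : ℕ) : ℝ) * (2 * (l:ℝ) + ((m + 2 : ℕ) : ℝ) + 1) := by positivity
  have hY2 : (((m + 2 : ℕ) : ℝ) * (2 * (l:ℝ) + ((m + 2 : ℕ) : ℝ) + 1)) ^ 2
      ≤ (2 * (l:ℝ) + 1) ^ 2 * ((m:ℝ) + 3) ^ 4 := by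
    calc (((m + 2 : ℕ) : ℝ) * (2 * (l:ℝ) + ((m + 2 : ℕ) : ℝ) + 1)) ^ 2
        ≤ ((2 * (l:ℝ) + 1) * ((m:ℝ) + 3) ^ 2) ^ 2 := pow_le_pow_left₀ hY0 hY 2
      _ = (2 * (l:ℝ) + 1) ^ 2 * ((m:ℝ) + 3) ^ 4 := by ring
  have hfact : (m.factorial : ℝ) ≤ ((m + 2).factorial : ℝ) := by
    exact_mod_cast Nat.factorial_le (by omega)
  have hfp := fact_pos m
  have hfp2 := fact_pos (m + 2)
  calc 2 * 3 ^ (m + 2) * (((m + 2 : ℕ) : ℝ) * (2 * (l:ℝ) + ((m + 2 : ℕ) : ℝ) + 1)) ^ 2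
        / (((m + 2).factorial : ℝ)) * M ^ m
      ≤ 2 * 3 ^ (m + 2) * ((2 * (l:ℝ) + 1) ^ 2 * ((m:ℝ) + 3) ^ 4)
          / ((m.factorial : ℝ)) * M ^ m := by
        gcongr
      _ ≤ 2 * 3 ^ (m + 2) * ((2 * (l:ℝ) + 1) ^ 2 * (24 * Real.exp ((m:ℝ) + 3)))
          / ((m.factorial : ℝ)) * M ^ m := by
        gcongr
      _ = 432 * Real.exp 3 * (2 * (l:ℝ) + 1) ^ 2 * (3 * Real.exp 1 * M) ^ m
          / (m.factorial : ℝ) := by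
        rw [hexp, mul_pow, mul_pow]
        ring

end CoulombAux

open CoulombAux in
set_option maxHeartbeats 1000000 in
/-- For fixed `l` and `R > 0` there is `C > 0` such that for all integers `n > l` and all
`r ∈ (0, R]`, `|f_{nl}(r) − J_{2l+1}(√(8r))/√(8r)| ≤ C r^{3/4} n^{-2}`. -/
theorem fnl_sub_besselProfile_bound (l : ℕ) (R : ℝ) (hR : 0 < R) :
    ∃ C : ℝ, 0 < C ∧ ∀ n : ℕ, l < n → ∀ r ∈ Set.Ioc (0 : ℝ) R,
      |fnl n l r - besselProfile l r| ≤ C * r ^ ((3 : ℝ) / 4) / (n : ℝ) ^ 2 := by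
  classical
  set c : ℝ := (2:ℝ) ^ ((l : ℤ) - 1) with hc
  have hc0 : 0 < c := cpow_pos l
  set M : ℝ := max 1 R with hM
  have hM1 : (1:ℝ) ≤ M := le_max_left _ _
  have hM0 : (0:ℝ) < M := lt_of_lt_of_le one_pos hM1
  have hRM : R ≤ M := le_max_right _ _
  set x : ℝ := 3 * Real.exp 1 * M with hx
  have hx0 : (0:ℝ) < x := by positivity
  set K1 : ℝ := 432 * Real.exp 3 * (2 * (l:ℝ) + 1) ^ 2 with hK1
  have hK10 : (0:ℝ) < K1 := by positivity
  have hsumx : Summable (fun m : ℕ => K1 * (x ^ m / (m.factorial : ℝ))) :=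
    (Real.summable_pow_div_factorial x).mul_left K1
  set T0 : ℝ := ∑' m : ℕ, K1 * (x ^ m / (m.factorial : ℝ)) with hT0def
  have hT0 : 0 ≤ T0 := tsum_nonneg fun m => by positivity
  refine ⟨c * M ^ l * M ^ ((5:ℝ)/4) * (T0 + 1), by positivity, ?_⟩
  intro n hn r hr
  obtain ⟨hr0, hrR⟩ := hr
  have hrM : r ≤ M := le_trans hrR hRM
  have hN0 : (0:ℝ) < n := by exact_mod_cast (show 0 < n by omega)
  have hN2 : (0:ℝ) < (n:ℝ) ^ 2 := by positivity
  -- summability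
  have hsum_d : Summable (fun j => dcoef n l j * r ^ (j + l)) := by
    refine Summable.of_norm_bounded
      (((Real.summable_pow_div_factorial (3 * r)).mul_left (c * r ^ l))) ?_
    intro j
    calc ‖dcoef n l j * r ^ (j + l)‖ = |dcoef n l j| * r ^ (j + l) := by
          rw [Real.norm_eq_abs, abs_mul, abs_pow, abs_of_pos hr0]
      _ ≤ c * (3 ^ j / (j.factorial : ℝ)) * r ^ (j + l) :=
          mul_le_mul_of_nonneg_right (abs_dcoef_le n l j hn) (by positivity)
      _ = c * r ^ l * ((3 * r) ^ j / (j.factorial : ℝ)) := by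
          rw [pow_add, mul_pow]; ring
  have hsum_b : Summable (fun j => bcoef l j * r ^ (j + l)) := by
    refine Summable.of_norm_bounded
      (((Real.summable_pow_div_factorial (2 * r)).mul_left (c * r ^ l))) ?_
    intro j
    calc ‖bcoef l j * r ^ (j + l)‖ = |bcoef l j| * r ^ (j + l) := by
          rw [Real.norm_eq_abs, abs_mul, abs_pow, abs_of_pos hr0]
      _ ≤ c * (2 ^ j / (j.factorial : ℝ)) * r ^ (j + l) :=
          mul_le_mul_of_nonneg_right (abs_bcoef_le l j) (by positivity)
      _ = c * r ^ l * ((2 * r) ^ j / (j.factorial : ℝ)) := by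
          rw [pow_add, mul_pow]; ring
  have hsub : Summable (fun j => (dcoef n l j - bcoef l j) * r ^ (j + l)) :=
    (hsum_d.sub hsum_b).congr fun j => by ring
  have heq : fnl n l r - besselProfile l r
      = ∑' j, (dcoef n l j - bcoef l j) * r ^ (j + l) := by
    rw [fnl_tsum n l hn r, besselProfile_tsum l r hr0, ← hsum_d.tsum_sub hsum_b]
    exact tsum_congr fun j => by ring
  have htail : ∑' j, (dcoef n l j - bcoef l j) * r ^ (j + l)
      = ∑' m, (dcoef n l (m + 2) - bcoef l (m + 2)) * r ^ ((m + 2) + l) := by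
    rw [hsub.tsum_eq_zero_add, ((summable_nat_add_iff 1).mpr hsub).tsum_eq_zero_add]
    have h0 : dcoef n l 0 - bcoef l 0 = 0 := by rw [dcoef_zero]; ring
    have h1 : dcoef n l (0 + 1) - bcoef l (0 + 1) = 0 := by
      norm_num
      rw [dcoef_one n l hn, sub_self]
    rw [h0, h1]
    simp only [zero_mul, zero_add]
  -- termwise bound on tail
  have hterm : ∀ m : ℕ, ‖(dcoef n l (m + 2) - bcoef l (m + 2)) * r ^ ((m + 2) + l)‖
      ≤ (c * r ^ l * r ^ 2 / (n:ℝ) ^ 2) * (K1 * (x ^ m / (m.factorial : ℝ))) := by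
    intro m
    have hE := Ebound n l (m + 2) hn (by omega)
    have h1 : ‖(dcoef n l (m + 2) - bcoef l (m + 2)) * r ^ ((m + 2) + l)‖
        = |dcoef n l (m + 2) - bcoef l (m + 2)| * r ^ ((m + 2) + l) := by
      rw [Real.norm_eq_abs, abs_mul, abs_pow, abs_of_pos hr0]
    rw [h1, dcoef_sub_bcoef]
    have h2 : c * |Ssum n l (m + 2) / (n:ℝ) ^ (m + 2)
          - 2 ^ (m + 2) / (((m + 2).factorial : ℝ) * ((m + 2) + 2 * l + 1).factorial)|
          * r ^ ((m + 2) + l)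
        ≤ c * (2 * 3 ^ (m + 2) * (((m + 2 : ℕ) : ℝ) * (2 * l + (m + 2 : ℕ) + 1)) ^ 2
            / (((m + 2).factorial : ℝ) * (n:ℝ) ^ 2)) * r ^ ((m + 2) + l) := by
      refine mul_le_mul_of_nonneg_right (mul_le_mul_of_nonneg_left ?_ hc0.le) (by positivity)
      exact hE
    refine le_trans h2 ?_
    have h3 : c * (2 * 3 ^ (m + 2) * (((m + 2 : ℕ) : ℝ) * (2 * l + (m + 2 : ℕ) + 1)) ^ 2
            / (((m + 2).factorial : ℝ) * (n:ℝ) ^ 2)) * r ^ ((m + 2) + l)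
        = (c * r ^ l * r ^ 2 / (n:ℝ) ^ 2)
            * (2 * 3 ^ (m + 2) * (((m + 2 : ℕ) : ℝ) * (2 * l + (m + 2 : ℕ) + 1)) ^ 2
              / (((m + 2).factorial : ℝ)) * r ^ m) := by
      rw [show (m + 2) + l = m + 2 + l from rfl, pow_add, pow_add]
      ring
    rw [h3]
    refine mul_le_mul_of_nonneg_left ?_ (by positivity)
    calc 2 * 3 ^ (m + 2) * (((m + 2 : ℕ) : ℝ) * (2 * l + (m + 2 : ℕ) + 1)) ^ 2
            / (((m + 2).factorial : ℝ)) * r ^ m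
        ≤ 2 * 3 ^ (m + 2) * (((m + 2 : ℕ) : ℝ) * (2 * l + (m + 2 : ℕ) + 1)) ^ 2
            / (((m + 2).factorial : ℝ)) * M ^ m := by
          refine mul_le_mul_of_nonneg_left (pow_le_pow_left₀ hr0.le hrM m) (by positivity)
      _ ≤ K1 * (x ^ m / (m.factorial : ℝ)) := by
          rw [hK1, hx]
          have := Gmaj l m M hM0.le
          calc 2 * 3 ^ (m + 2) * (((m + 2 : ℕ) : ℝ) * (2 * l + (m + 2 : ℕ) + 1)) ^ 2
                / (((m + 2).factorial : ℝ)) * M ^ m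
              ≤ 432 * Real.exp 3 * (2 * (l:ℝ) + 1) ^ 2 * (3 * Real.exp 1 * M) ^ m
                / (m.factorial : ℝ) := this
            _ = 432 * Real.exp 3 * (2 * (l:ℝ) + 1) ^ 2
                * ((3 * Real.exp 1 * M) ^ m / (m.factorial : ℝ)) := by ring
  set h : ℕ → ℝ := fun m => (c * r ^ l * r ^ 2 / (n:ℝ) ^ 2)
      * (K1 * (x ^ m / (m.factorial : ℝ))) with hh
  have hsumh : Summable h := hsumx.mul_left _
  have hsumnorm : Summable (fun m => ‖(dcoef n l (m + 2) - bcoef l (m + 2))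
      * r ^ ((m + 2) + l)‖) :=
    Summable.of_nonneg_of_le (fun m => norm_nonneg _) hterm hsumh
  have hbound : |∑' m, (dcoef n l (m + 2) - bcoef l (m + 2)) * r ^ ((m + 2) + l)|
      ≤ (c * r ^ l * r ^ 2 / (n:ℝ) ^ 2) * T0 := by
    calc |∑' m, (dcoef n l (m + 2) - bcoef l (m + 2)) * r ^ ((m + 2) + l)|
        ≤ ∑' m, ‖(dcoef n l (m + 2) - bcoef l (m + 2)) * r ^ ((m + 2) + l)‖ :=
          norm_tsum_le_tsum_norm hsumnorm
      _ ≤ ∑' m, h m := hsumnorm.tsum_le_tsum hterm hsumh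
      _ = (c * r ^ l * r ^ 2 / (n:ℝ) ^ 2) * T0 := by
          rw [hh, hT0def, tsum_mul_left]
  -- final chain
  rw [heq, htail]
  refine le_trans hbound ?_
  have hr2 : r ^ (2:ℕ) = r ^ ((3:ℝ)/4) * r ^ ((5:ℝ)/4) := by
    rw [← Real.rpow_natCast r 2, ← Real.rpow_add hr0]
    norm_num
  have hrl : r ^ l ≤ M ^ l := pow_le_pow_left₀ hr0.le hrM l
  have hr54 : r ^ ((5:ℝ)/4) ≤ M ^ ((5:ℝ)/4) :=
    Real.rpow_le_rpow hr0.le hrM (by norm_num)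
  have h34 : (0:ℝ) < r ^ ((3:ℝ)/4) := Real.rpow_pos_of_pos hr0 _
  have h54 : (0:ℝ) < r ^ ((5:ℝ)/4) := Real.rpow_pos_of_pos hr0 _
  calc (c * r ^ l * r ^ 2 / (n:ℝ) ^ 2) * T0
      = (c * r ^ l * (r ^ ((3:ℝ)/4) * r ^ ((5:ℝ)/4)) / (n:ℝ) ^ 2) * T0 := by rw [← hr2]
    _ = (c * r ^ l * r ^ ((5:ℝ)/4) * T0) * r ^ ((3:ℝ)/4) / (n:ℝ) ^ 2 := by ring
    _ ≤ (c * M ^ l * M ^ ((5:ℝ)/4) * (T0 + 1)) * r ^ ((3:ℝ)/4) / (n:ℝ) ^ 2 := by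
        gcongr <;> first | exact hrl | exact hr54 | linarith | positivity
    _ = c * M ^ l * M ^ ((5:ℝ)/4) * (T0 + 1) * r ^ ((3:ℝ)/4) / (n:ℝ) ^ 2 := by ring
end
end
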